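/- If Q is an acyclic quiver, then in the derived category D^b(kQ) of the path algebra, every object X satisfies: for all but finitely many integers i, Hom_{D^b(kQ)}(X, S₂^i Y) = 0, where S₂ = S[-2] is the square-shifted Serre functor; hence the orbit category D^b(kQ)/S₂ is Hom-finite. -/

import Mathlib

open CategoryTheory CategoryTheory.Limits

/-!
Hom-finiteness of the cluster category of an acyclic quiver.

`D` plays the role of the bounded derived category `D^b(kQ)` of the (hereditary,
finite dimensional) path algebra of an acyclic quiver `Q`, `G` plays the role of the
object `kQ`, `S₂` is the auto-equivalence `𝕊 ∘ [-2]` (so that the Serre duality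
isomorphism reads `Hom(X,Y) ≅ D Hom(Y, (S₂ X)⟦2⟧)`).

An object is a "module" if it has no negative or positive self-extensions against the
generator `G`; hereditariness of `kQ` is expressed by the facts that every object of
`D^b(kQ)` is a finite direct sum of shifts of modules, and that morphisms between
shifts of modules only exist in shift-degrees `0` and `1`.
-/

/-- Iterated composition power of an endofunctor. -/
def fpow {D : Type*} [Category D] (F : D ⥤ D) : ℕ → D ⥤ D
  | 0 => 𝟭 D
  | n + 1 => F ⋙ fpow F n

/-- Integer powers of a self-equivalence. -/
def epow {D : Type*} [Category D] (e : D ≌ D) : ℤ → D ⥤ D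
  | Int.ofNat n => fpow e.functor n
  | Int.negSucc n => fpow e.inverse (n + 1)

namespace ClusterAuxNS

set_option linter.unusedSectionVars false

variable {D : Type*} [Category D] [Preadditive D] [HasFiniteBiproducts D]

lemma cl_equivAdditive (F : D ⥤ D) [F.IsEquivalence] : F.Additive :=
  Functor.additive_of_preserves_binary_products F

lemma fpow_isEquivalence (F : D ⥤ D) [F.IsEquivalence] (n : ℕ) :
    (fpow F n).IsEquivalence := by
  induction n with
  | zero => rw [fpow]; infer_instance
  | succ n ih => rw [fpow]; haveI := ih; infer_instance

lemma epow_isEquivalence (e : D ≌ D) (i : ℤ) : (epow e i).IsEquivalence := by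
  cases i with
  | ofNat n => rw [epow]; exact fpow_isEquivalence e.functor n
  | negSucc n => rw [epow]; exact fpow_isEquivalence e.inverse (n + 1)

/-- Existence of a nonzero morphism. -/
def Nz (A B : D) : Prop := ∃ f : A ⟶ B, f ≠ 0

lemma not_nz {A B : D} (h : ¬ Nz A B) : ∀ f : A ⟶ B, f = 0 := by
  intro f
  by_contra hf
  exact h ⟨f, hf⟩

lemma nz_map (F : D ⥤ D) [F.IsEquivalence] {A B : D} : Nz A B ↔ Nz (F.obj A) (F.obj B) := by
  haveI : F.Additive := cl_equivAdditive F
  constructor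
  · rintro ⟨f, hf⟩
    exact ⟨F.map f, fun h => hf (F.map_injective (by rw [h, F.map_zero]))⟩
  · rintro ⟨g, hg⟩
    obtain ⟨f, rfl⟩ := F.map_surjective g
    exact ⟨f, fun h => hg (by rw [h, F.map_zero])⟩

lemma nz_iso_left {A A' B : D} (e : A ≅ A') : Nz A B ↔ Nz A' B := by
  constructor
  · rintro ⟨f, hf⟩
    refine ⟨e.inv ≫ f, fun h => hf ?_⟩
    rw [← Iso.hom_inv_id_assoc e f, h, comp_zero]
  · rintro ⟨f, hf⟩
    refine ⟨e.hom ≫ f, fun h => hf ?_⟩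
    rw [← Iso.inv_hom_id_assoc e f, h, comp_zero]

lemma nz_iso_right {A B B' : D} (e : B ≅ B') : Nz A B ↔ Nz A B' := by
  constructor
  · rintro ⟨f, hf⟩
    refine ⟨f ≫ e.hom, fun h => hf ?_⟩
    have : (f ≫ e.hom) ≫ e.inv = f := by simp
    rw [← this, h, zero_comp]
  · rintro ⟨f, hf⟩
    refine ⟨f ≫ e.inv, fun h => hf ?_⟩
    have : (f ≫ e.inv) ≫ e.hom = f := by simp
    rw [← this, h, zero_comp]

section Shift

variable [HasShift D ℤ]

lemma nz_shift (t : ℤ) {A B : D} : Nz A B ↔ Nz (A⟦t⟧) (B⟦t⟧) :=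
  nz_map (shiftFunctor D t)

lemma nz_shift_add {A B : D} (a b : ℤ) : Nz A (B⟦a⟧⟦b⟧) ↔ Nz A (B⟦a + b⟧) :=
  (nz_iso_right (shiftAdd B a b)).symm

lemma nz_shift_eq {A B : D} {a b : ℤ} (h : a = b) : Nz A (B⟦a⟧) ↔ Nz A (B⟦b⟧) := by
  subst h; rfl

lemma nz_shift_zero {A B : D} : Nz A (B⟦(0 : ℤ)⟧) ↔ Nz A B :=
  nz_iso_right ((shiftFunctorZero D ℤ).app B)

lemma nz_shift_up {A B : D} (t s : ℤ) : Nz A (B⟦t⟧) ↔ Nz (A⟦s⟧) (B⟦t + s⟧) :=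
  (nz_shift s).trans (nz_shift_add t s)

end Shift

section Biprod

lemma nz_from_biproduct {n : ℕ} {P : Fin n → D} {W : D} (h : Nz (⨁ P) W) :
    ∃ l, Nz (P l) W := by
  obtain ⟨f, hf⟩ := h
  by_contra hc
  push_neg at hc
  refine hf (biproduct.hom_ext' _ _ fun l => ?_)
  have := not_nz (hc l) (biproduct.ι P l ≫ f)
  simp [this]

lemma nz_into_biproduct {n : ℕ} {P : Fin n → D} {W : D} (h : Nz W (⨁ P)) :
    ∃ l, Nz W (P l) := by
  obtain ⟨f, hf⟩ := h
  by_contra hc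
  push_neg at hc
  refine hf (biproduct.hom_ext _ _ fun l => ?_)
  have := not_nz (hc l) (f ≫ biproduct.π P l)
  simp [this]

variable [HasShift D ℤ]

lemma nz_split {n : ℕ} {P : Fin n → D} {c : Fin n → ℤ} {W V : D}
    (h : W ≅ ⨁ fun l => (P l)⟦c l⟧) (hnz : Nz W V) :
    ∃ l, Nz (P l) (V⟦-(c l)⟧) ∧ Nz (P l) (W⟦-(c l)⟧) := by
  obtain ⟨l, hl⟩ := nz_from_biproduct ((nz_iso_left h).mp hnz)
  have hW : Nz ((P l)⟦c l⟧) W := by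
    obtain ⟨q, hq⟩ := hl
    refine ⟨biproduct.ι (fun l => (P l)⟦c l⟧) l ≫ h.inv, fun h0 => ?_⟩
    have hid : 𝟙 ((P l)⟦c l⟧) = 0 := by
      have h2 : (biproduct.ι (fun l => (P l)⟦c l⟧) l ≫ h.inv) ≫
          h.hom ≫ biproduct.π (fun l => (P l)⟦c l⟧) l = 0 := by
        rw [h0, zero_comp]
      simpa [biproduct.ι_π_self] using h2
    exact hq (by rw [← Category.id_comp q, hid, zero_comp])
  refine ⟨l, ?_, ?_⟩
  · exact (nz_iso_left (shiftShiftNeg (P l) (c l))).mp ((nz_shift (-(c l))).mp hl)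
  · exact (nz_iso_left (shiftShiftNeg (P l) (c l))).mp ((nz_shift (-(c l))).mp hW)

end Biprod

section Serre

variable {k : Type*} [Field k] [Linear k D] [HasShift D ℤ]

lemma nz_dual {V W : Type*} [AddCommGroup V] [Module k V] [AddCommGroup W] [Module k W]
    (e : V ≃ₗ[k] Module.Dual k W) : (∃ v : V, v ≠ 0) ↔ (∃ w : W, w ≠ 0) := by
  constructor
  · rintro ⟨v, hv⟩
    by_contra h
    push_neg at h
    refine hv (e.injective ?_)
    rw [map_zero]
    ext w
    simp [h w]
  · rintro ⟨w, hw⟩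
    obtain ⟨φ, hφ⟩ : ∃ φ : Module.Dual k W, φ w ≠ 0 := by
      by_contra h
      push_neg at h
      exact hw ((Module.forall_dual_apply_eq_zero_iff k w).mp h)
    refine ⟨e.symm φ, fun h0 => hφ ?_⟩
    have : φ = 0 := by rw [← e.apply_symm_apply φ, h0, map_zero]
    rw [this]
    rfl

variable (S₂ : D ≌ D)
variable (hSerre : ∀ X Y : D,
    Nonempty ((X ⟶ Y) ≃ₗ[k] Module.Dual k (Y ⟶ (S₂.functor.obj X)⟦(2 : ℤ)⟧)))

include hSerre

lemma nz_serre (X Y : D) : Nz X Y ↔ Nz Y ((S₂.functor.obj X)⟦(2 : ℤ)⟧) := by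
  obtain ⟨e⟩ := hSerre X Y
  exact nz_dual e

lemma nz_star (W Z : D) (t : ℤ) :
    Nz W ((S₂.functor.obj Z)⟦t⟧) ↔ Nz Z (W⟦2 - t⟧) := by
  calc Nz W ((S₂.functor.obj Z)⟦t⟧)
      ↔ Nz (W⟦2 - t⟧) ((S₂.functor.obj Z)⟦t + (2 - t)⟧) := nz_shift_up t (2 - t)
    _ ↔ Nz (W⟦2 - t⟧) ((S₂.functor.obj Z)⟦(2 : ℤ)⟧) := nz_shift_eq (by ring)
    _ ↔ Nz Z (W⟦2 - t⟧) := (nz_serre S₂ hSerre Z (W⟦2 - t⟧)).symm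

lemma nz_starstar (A Z : D) :
    Nz (S₂.inverse.obj Z) A ↔ Nz A (Z⟦(2 : ℤ)⟧) := by
  calc Nz (S₂.inverse.obj Z) A
      ↔ Nz A ((S₂.functor.obj (S₂.inverse.obj Z))⟦(2 : ℤ)⟧) :=
        nz_serre S₂ hSerre (S₂.inverse.obj Z) A
    _ ↔ Nz A (Z⟦(2 : ℤ)⟧) :=
        nz_iso_right ((shiftFunctor D (2 : ℤ)).mapIso (S₂.counitIso.app Z))

end Serre

section Conc

variable {k : Type*} [Field k] [Linear k D] [HasShift D ℤ]
variable (Module? : D → Prop)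

/-- `Z` admits nonzero maps from modules only in shift degrees within `[a, b]`. -/
def Conc (Z : D) (a b : ℤ) : Prop :=
  ∀ M : D, Module? M → ∀ t : ℤ, Nz M (Z⟦t⟧) → a ≤ t ∧ t ≤ b

variable {Module? : D → Prop}
variable (hhered : ∀ M N : D, Module? M → Module? N →
    ∀ i : ℤ, i ≠ 0 → i ≠ 1 → ∀ f : M ⟶ N⟦i⟧, f = 0)
variable (hdec : ∀ X : D, ∃ (n : ℕ) (M : Fin n → D) (d : Fin n → ℤ),
    (∀ j, Module? (M j)) ∧ Nonempty (X ≅ ⨁ fun j => (M j)⟦d j⟧))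
variable (S₂ : D ≌ D)
variable (hSerre : ∀ X Y : D,
    Nonempty ((X ⟶ Y) ≃ₗ[k] Module.Dual k (Y ⟶ (S₂.functor.obj X)⟦(2 : ℤ)⟧)))

include hhered in
lemma conc_module {N : D} (hN : Module? N) : Conc Module? N 0 1 := by
  intro M hM t h
  by_contra hc
  obtain ⟨f, hf⟩ := h
  exact hf (hhered M N hM hN t (by omega) (by omega) f)

lemma conc_shift {Z : D} {a b : ℤ} (hZ : Conc Module? Z a b) (e : ℤ) :
    Conc Module? (Z⟦e⟧) (a - e) (b - e) := by
  intro M hM t h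
  have h' : Nz M (Z⟦e + t⟧) := (nz_shift_add e t).mp h
  have := hZ M hM (e + t) h'
  omega

include hhered hdec hSerre in
lemma conc_key {Z : D} {a b : ℤ} (hZ : Conc Module? Z a b) :
    Conc Module? (S₂.functor.obj Z) (a + 1) (b + 2) := by
  intro M hM t h
  have h1 : Nz Z (M⟦2 - t⟧) := (nz_star S₂ hSerre M Z t).mp h
  obtain ⟨n, P, c, hP, ⟨hiso⟩⟩ := hdec Z
  obtain ⟨l, hl1, hl2⟩ := nz_split hiso h1
  have hl1' : Nz (P l) (M⟦2 - t - c l⟧) :=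
    (nz_shift_eq (by ring)).mp ((nz_shift_add (2 - t) (-(c l))).mp hl1)
  have hs : 2 - t - c l = 0 ∨ 2 - t - c l = 1 := by
    by_contra hc
    push_neg at hc
    obtain ⟨f, hf⟩ := hl1'
    exact hf (hhered _ _ (hP l) hM _ hc.1 hc.2 f)
  have hb := hZ (P l) (hP l) (-(c l)) hl2
  omega

include hhered hdec hSerre in
lemma conc_keyneg {Z : D} {a b : ℤ} (hZ : Conc Module? Z a b) :
    Conc Module? (S₂.inverse.obj Z) (a - 3) (b - 1) := by
  intro M hM t h
  have h1 : Nz (M⟦-t⟧) (S₂.inverse.obj Z) :=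
    nz_shift_zero.mp ((nz_shift_eq (show t + -t = 0 by ring)).mp ((nz_shift_up t (-t)).mp h))
  have h2 : Nz (S₂.inverse.obj Z) ((S₂.functor.obj (M⟦-t⟧))⟦(2 : ℤ)⟧) :=
    (nz_serre S₂ hSerre _ _).mp h1
  have h3 : Nz ((S₂.functor.obj (M⟦-t⟧))⟦(2 : ℤ)⟧) (Z⟦(2 : ℤ)⟧) :=
    (nz_starstar S₂ hSerre _ Z).mp h2
  have h4 : Nz (S₂.functor.obj (M⟦-t⟧)) Z := (nz_shift 2).mpr h3
  have hcM : Conc Module? (M⟦-t⟧) (0 - -t) (1 - -t) :=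
    conc_shift (conc_module hhered hM) (-t)
  have hcS : Conc Module? (S₂.functor.obj (M⟦-t⟧)) (0 - -t + 1) (1 - -t + 2) :=
    conc_key hhered hdec S₂ hSerre hcM
  obtain ⟨n, P, c, hP, ⟨hiso⟩⟩ := hdec (S₂.functor.obj (M⟦-t⟧))
  obtain ⟨l, hl1, hl2⟩ := nz_split hiso h4
  have hb1 := hZ (P l) (hP l) (-(c l)) hl1
  have hb2 := hcS (P l) (hP l) (-(c l)) hl2
  omega

include hhered hdec hSerre in
lemma conc_fpow_pos (n : ℕ) {Z : D} {a b : ℤ} (hZ : Conc Module? Z a b) :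
    Conc Module? ((fpow S₂.functor n).obj Z) (a + n) (b + 2 * n) := by
  induction n generalizing Z a b with
  | zero =>
    intro M hM t h
    have h' : Nz M (Z⟦t⟧) := h
    have := hZ M hM t h'
    omega
  | succ n ih =>
    intro M hM t h
    have h' : Nz M (((fpow S₂.functor n).obj (S₂.functor.obj Z))⟦t⟧) := h
    have := ih (conc_key hhered hdec S₂ hSerre hZ) M hM t h'
    omega

include hhered hdec hSerre in
lemma conc_fpow_neg (n : ℕ) {Z : D} {a b : ℤ} (hZ : Conc Module? Z a b) :
    Conc Module? ((fpow S₂.inverse n).obj Z) (a - 3 * n) (b - n) := by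
  induction n generalizing Z a b with
  | zero =>
    intro M hM t h
    have h' : Nz M (Z⟦t⟧) := h
    have := hZ M hM t h'
    omega
  | succ n ih =>
    intro M hM t h
    have h' : Nz M (((fpow S₂.inverse n).obj (S₂.inverse.obj Z))⟦t⟧) := h
    have := ih (conc_keyneg hhered hdec S₂ hSerre hZ) M hM t h'
    omega

end Conc

end ClusterAuxNS

open ClusterAuxNS in
/-- For the bounded derived category of an acyclic quiver, every pair of objects `X, Y`
satisfies `Hom(X, S₂^i Y) = 0` for all but finitely many `i ∈ ℤ`; hence the orbit
category `D^b(kQ)/S₂`, whose Hom-spaces are `⊕_{i ∈ ℤ} Hom(X, S₂^i Y)`, is Hom-finite. -/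
theorem cluster_category_hom_finite (k : Type*) [Field k]
    (D : Type*) [Category D] [Preadditive D] [Linear k D] [HasShift D ℤ]
    [HasFiniteBiproducts D]
    (hfin : ∀ X Y : D, FiniteDimensional k (X ⟶ Y))
    (S₂ : D ≌ D)
    (hSerre : ∀ X Y : D,
      Nonempty ((X ⟶ Y) ≃ₗ[k] Module.Dual k (Y ⟶ (S₂.functor.obj X)⟦(2 : ℤ)⟧)))
    (G : D)
    -- the "modules" are the objects with no `G`-cohomology outside degree `0`
    (Module? : D → Prop)
    (hMod : ∀ X : D, Module? X ↔ ∀ i : ℤ, i ≠ 0 → ∀ f : G ⟶ X⟦i⟧, f = 0)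
    -- hereditariness: every object is a finite direct sum of shifts of modules
    (hdec : ∀ X : D, ∃ (n : ℕ) (M : Fin n → D) (d : Fin n → ℤ),
      (∀ j, Module? (M j)) ∧ Nonempty (X ≅ ⨁ fun j => (M j)⟦d j⟧))
    -- and morphisms between modules exist only in shift-degrees 0 and 1
    (hhered : ∀ M N : D, Module? M → Module? N →
      ∀ i : ℤ, i ≠ 0 → i ≠ 1 → ∀ f : M ⟶ N⟦i⟧, f = 0) :
    ∀ X Y : D,
      {i : ℤ | ∃ f : X ⟶ (epow S₂ i).obj Y, f ≠ 0}.Finite ∧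
      FiniteDimensional k (DirectSum ℤ fun i : ℤ => (X ⟶ (epow S₂ i).obj Y)) := by
  intro X Y
  classical
  obtain ⟨m, M, d, hMmod, ⟨hX⟩⟩ := hdec X
  obtain ⟨m', N, e, hNmod, ⟨hY⟩⟩ := hdec Y
  -- the per-summand-pair sets of possibly-nonvanishing degrees
  set T : Fin m × Fin m' → Set ℤ := fun p =>
    {i : ℤ | Nz (M p.1) (((epow S₂ i).obj ((N p.2)⟦e p.2⟧))⟦-(d p.1)⟧)} with hT
  have hTfin : ∀ p, (T p).Finite := by
    rintro ⟨j, l⟩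
    have hconc : Conc Module? ((N l)⟦e l⟧) (0 - e l) (1 - e l) :=
      conc_shift (conc_module hhered (hNmod l)) (e l)
    apply Set.Finite.subset
      (((Set.finite_Icc (0 : ℤ) (e l - d j)).union
        (Set.finite_Icc (e l - d j - 1) (-1))))
    intro i hi
    simp only [hT, Set.mem_setOf_eq] at hi
    simp only [Set.mem_union, Set.mem_Icc]
    rcases i with n | n
    · have hi' : Nz (M j) (((fpow S₂.functor n).obj ((N l)⟦e l⟧))⟦-(d j)⟧) := hi
      have hc := conc_fpow_pos hhered hdec S₂ hSerre n hconc (M j) (hMmod j) (-(d j)) hi'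
      have hn : (Int.ofNat n : ℤ) = (n : ℤ) := rfl
      rw [hn]
      omega
    · have hi' : Nz (M j) (((fpow S₂.inverse (n + 1)).obj ((N l)⟦e l⟧))⟦-(d j)⟧) := hi
      have hc := conc_fpow_neg hhered hdec S₂ hSerre (n + 1) hconc (M j) (hMmod j) (-(d j)) hi'
      have hn : (Int.negSucc n : ℤ) = -((n : ℤ) + 1) := Int.negSucc_eq n
      rw [hn]
      omega
  have hfinite : {i : ℤ | ∃ f : X ⟶ (epow S₂ i).obj Y, f ≠ 0}.Finite := by
    apply Set.Finite.subset (Set.finite_iUnion hTfin)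
    intro i hi
    have hnz : Nz X ((epow S₂ i).obj Y) := hi
    haveI : (epow S₂ i).IsEquivalence := epow_isEquivalence S₂ i
    haveI : (epow S₂ i).Additive := cl_equivAdditive _
    have h1 : Nz (⨁ fun j => (M j)⟦d j⟧) ((epow S₂ i).obj Y) := (nz_iso_left hX).mp hnz
    obtain ⟨j, hj⟩ := nz_from_biproduct h1
    have h2 : Nz (M j) (((epow S₂ i).obj Y)⟦-(d j)⟧) :=
      (nz_iso_left (shiftShiftNeg (M j) (d j))).mp ((nz_shift (-(d j))).mp hj)
    have hYi : (epow S₂ i).obj Y ≅ ⨁ fun l => (epow S₂ i).obj ((N l)⟦e l⟧) :=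
      ((epow S₂ i).mapIso hY).trans (Functor.mapBiproduct _ _)
    have h3 : Nz (M j) ((⨁ fun l => (epow S₂ i).obj ((N l)⟦e l⟧))⟦-(d j)⟧) :=
      (nz_iso_right ((shiftFunctor D (-(d j))).mapIso hYi)).mp h2
    have h4 : Nz (M j) (⨁ fun l => ((epow S₂ i).obj ((N l)⟦e l⟧))⟦-(d j)⟧) := by
      haveI : (shiftFunctor D (-(d j))).Additive := cl_equivAdditive _
      exact (nz_iso_right (Functor.mapBiproduct _ _)).mp h3
    obtain ⟨l, hl⟩ := nz_into_biproduct h4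
    exact Set.mem_iUnion.mpr ⟨(j, l), hl⟩
  refine ⟨hfinite, ?_⟩
  set s : Finset ℤ := hfinite.toFinset with hs
  haveI : ∀ i : s, FiniteDimensional k (X ⟶ (epow S₂ (i : ℤ)).obj Y) := fun i => hfin _ _
  let Φ : (DirectSum ℤ fun i : ℤ => (X ⟶ (epow S₂ i).obj Y)) →ₗ[k]
      (∀ i : s, (X ⟶ (epow S₂ (i : ℤ)).obj Y)) :=
    LinearMap.pi fun i => DirectSum.component k ℤ (fun i : ℤ => (X ⟶ (epow S₂ i).obj Y)) (i : ℤ)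
  have hΦ : Function.Injective Φ := by
    refine (injective_iff_map_eq_zero Φ).mpr fun x hx => ?_
    refine DirectSum.ext_component k fun i => ?_
    rw [map_zero]
    by_cases hi : i ∈ s
    · have h0 : Φ x ⟨i, hi⟩ = 0 := by rw [hx]; rfl
      exact h0
    · have hz : ∀ f : X ⟶ (epow S₂ i).obj Y, f = 0 := by
        intro f
        by_contra hf
        exact hi (hfinite.mem_toFinset.mpr ⟨f, hf⟩)
      exact hz _
  exact FiniteDimensional.of_injective Φ hΦ
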